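/- arXiv:2603.02474 — 2 statements merged into one kernel-verified Lean document; each statement's English description precedes it below -/
import Mathlib

section
/- Suppose the covariate shift function is log-linear in Φ: w(x) = exp(a₀ + aᵀΦ(x)), with E[w(X)] = 1 and E[w(X)Φ(X)] = φ*. Then w coincides with the population entropy-balancing weight: w(x) = π_EB(x), where π_EB(x) = exp(λ₀ᵀ(Φ(x) − φ*)) / E[exp(λ₀ᵀ(Φ(X) − φ*))] with λ₀ = a satisfying E[(Φ(X) − φ*)·exp(λ₀ᵀ(Φ(X) − φ*))] = 0. Consequently μ_EB = E[π_EB(X)Y] = E[w(X)Y] = μ*. -/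
open MeasureTheory Real

/-- If the covariate shift function is log-linear in `Φ`,
`w(x) = exp(a₀ + aᵀΦ(x))`, with `E[w(X)] = 1` and `E[w(X)Φ(X)] = φ*`, then `w`
coincides with the population entropy-balancing weight with tilt `λ₀ = a`:
the defining moment equation holds with `λ₀ = a`, `w = π_EB` pointwise, and
consequently `μ_EB = E[π_EB(X) Y] = E[w(X) Y] = μ*`. -/
theorem eb_weight_eq_shift_of_loglinear_shift
    {Ω : Type*} [MeasurableSpace Ω] (μ : Measure Ω) [IsProbabilityMeasure μ]
    {d K : ℕ} (X : Ω → Fin d → ℝ) (Y : Ω → ℝ)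
    (Φ : (Fin d → ℝ) → Fin K → ℝ) (φstar : Fin K → ℝ)
    (w : (Fin d → ℝ) → ℝ) (a0 : ℝ) (a : Fin K → ℝ) (Z : ℝ)
    (hw : ∀ x, w x = Real.exp (a0 + ∑ k, a k * Φ x k))
    (hw1 : ∫ ω, w (X ω) ∂μ = 1)
    (hwΦ : ∀ k, ∫ ω, w (X ω) * Φ (X ω) k ∂μ = φstar k)
    (hint : ∀ k, Integrable (fun ω => w (X ω) * Φ (X ω) k) μ)
    (hintw : Integrable (fun ω => w (X ω)) μ)
    (hZ : Z = ∫ ω, Real.exp (∑ j, a j * (Φ (X ω) j - φstar j)) ∂μ)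
    (πEB : (Fin d → ℝ) → ℝ)
    (hπ : ∀ x, πEB x = Real.exp (∑ j, a j * (Φ x j - φstar j)) / Z) :
    (∀ k, ∫ ω, (Φ (X ω) k - φstar k) *
        Real.exp (∑ j, a j * (Φ (X ω) j - φstar j)) ∂μ = 0) ∧
    (∀ x, w x = πEB x) ∧
    ∫ ω, πEB (X ω) * Y ω ∂μ = ∫ ω, w (X ω) * Y ω ∂μ := by
  set C : ℝ := Real.exp (-(a0 + ∑ j, a j * φstar j)) with hC
  have key : ∀ x, Real.exp (∑ j, a j * (Φ x j - φstar j)) = w x * C := by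
    intro x
    rw [hw, hC, ← Real.exp_add]
    congr 1
    simp [mul_sub, Finset.sum_sub_distrib]
    ring
  have hZC : Z = C := by
    rw [hZ]
    simp_rw [key]
    rw [integral_mul_const, hw1, one_mul]
  have hmom : ∀ k, ∫ ω, (Φ (X ω) k - φstar k) *
      Real.exp (∑ j, a j * (Φ (X ω) j - φstar j)) ∂μ = 0 := by
    intro k
    simp_rw [key]
    have heq : (fun ω => (Φ (X ω) k - φstar k) * (w (X ω) * C)) =
        fun ω => (w (X ω) * Φ (X ω) k - φstar k * w (X ω)) * C := by
      funext ω; ring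
    rw [heq, integral_mul_const, integral_sub (hint k) ((hintw).const_mul _),
      hwΦ k, integral_const_mul, hw1]
    simp
  have hwπ : ∀ x, w x = πEB x := by
    intro x
    rw [hπ, key, hZC, mul_div_assoc, div_self (Real.exp_ne_zero _), mul_one]
  refine ⟨hmom, hwπ, ?_⟩
  simp_rw [hwπ]
end

section
/- When the working model is saturated with respect to the constraints, i.e., π(x;α) = exp(c + ξᵀΦ(x)) with α = (c, ξ) of dimension K+1, any solution of the constrained problem has uniform base weights: if q_i = exp(ηᵀh(x_i;α,φ))/Σ_l exp(ηᵀh(x_l;α,φ)) satisfies the K+1 constraints Σ_i q_i h(x_i;α,φ) = 0 and (α, η, φ) is a stationary point of the saddle-point problem with η = 0 feasible, then taking η = 0 gives q_i = 1/n, and the two weight systems coincide: the entropy balancing weights satisfy p̂_i = n^{-1}π(x_i; α̂) where α̂ = (ĉ, λ̂) with λ̂ the entropy balancing dual solution and ĉ chosen so that Σ_i n^{-1}π(x_i;α̂) = 1. -/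
open Real Finset

/-- Saturated working model: when `π(x;α) = exp(c + ξᵀΦ(x))` with `α = (c, ξ)` of
dimension `K+1`, the proposed method with uniform base weights `q_i = 1/n` reproduces
entropy balancing. Precisely, let `λ̂` solve the entropy balancing equation, let `p̂` be
the EB weights, set `ξ̂ = λ̂` and
`ĉ = −λ̂ᵀφ̂* − log(n⁻¹ Σ_l exp(λ̂ᵀ(Φ(x_l) − φ̂*)))`, and let
`π̂(x) = exp(ĉ + ξ̂ᵀΦ(x))`. Then `p̂_i = n⁻¹ π̂(x_i)` for all `i`; with `q_i = 1/n` the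
constraints `Σ_i q_i (π̂(x_i) − 1) = 0` and `Σ_i q_i π̂(x_i)(Φ(x_i) − φ̂*) = 0` hold;
and the two weighted estimators coincide: `Σ_i q_i π̂(x_i) y_i = Σ_i p̂_i y_i` for any
outcomes `y`. -/
theorem saturated_model_reproduces_entropy_balancing
    {d K n : ℕ} (hn : 0 < n)
    (x : Fin n → Fin d → ℝ) (Φ : (Fin d → ℝ) → Fin K → ℝ)
    (φhat : Fin K → ℝ) (lam : Fin K → ℝ)
    (hbal : ∀ k, ∑ i, (Φ (x i) k - φhat k) *
      Real.exp (∑ j, lam j * (Φ (x i) j - φhat j)) = 0)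
    (p : Fin n → ℝ)
    (hp : ∀ i, p i =
      Real.exp (∑ j, lam j * (Φ (x i) j - φhat j)) /
        ∑ l, Real.exp (∑ j, lam j * (Φ (x l) j - φhat j)))
    (c : ℝ)
    (hc : c = -(∑ j, lam j * φhat j) -
      Real.log ((n : ℝ)⁻¹ * ∑ l, Real.exp (∑ j, lam j * (Φ (x l) j - φhat j))))
    (pihat : (Fin d → ℝ) → ℝ)
    (hpi : ∀ z, pihat z = Real.exp (c + ∑ j, lam j * Φ z j)) :
    (∀ i, p i = (n : ℝ)⁻¹ * pihat (x i)) ∧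
    (∑ i, ((n : ℝ)⁻¹) * (pihat (x i) - 1) = 0) ∧
    (∀ k, ∑ i, ((n : ℝ)⁻¹) * (pihat (x i) * (Φ (x i) k - φhat k)) = 0) ∧
    (∀ y : Fin n → ℝ, ∑ i, ((n : ℝ)⁻¹) * pihat (x i) * y i = ∑ i, p i * y i) := by
  set S : ℝ := ∑ l, Real.exp (∑ j, lam j * (Φ (x l) j - φhat j)) with hS
  have hSpos : 0 < S := by
    apply Finset.sum_pos (fun l _ => Real.exp_pos _)
    exact Finset.univ_nonempty_iff.mpr (Fin.pos_iff_nonempty.mp hn)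
  have hnpos : (0:ℝ) < (n:ℝ)⁻¹ := by positivity
  have hkey : ∀ i, p i = (n : ℝ)⁻¹ * pihat (x i) := by
    intro i
    rw [hp, hpi, hc]
    have h1 : -(∑ j, lam j * φhat j) - Real.log ((n : ℝ)⁻¹ * S) + ∑ j, lam j * Φ (x i) j
        = (∑ j, lam j * (Φ (x i) j - φhat j)) - Real.log ((n : ℝ)⁻¹ * S) := by
      simp only [mul_sub, Finset.sum_sub_distrib]
      ring
    rw [h1, Real.exp_sub, Real.exp_log (by positivity)]
    field_simp
  refine ⟨hkey, ?_, ?_, ?_⟩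
  · have hpsum : ∑ i, p i = 1 := by
      simp only [hp]
      rw [← Finset.sum_div, div_self hSpos.ne']
    calc ∑ i, ((n : ℝ)⁻¹) * (pihat (x i) - 1)
        = ∑ i, (p i - (n:ℝ)⁻¹) := by
          refine Finset.sum_congr rfl fun i _ => ?_
          rw [hkey i]; ring
      _ = 0 := by
          rw [Finset.sum_sub_distrib, hpsum, Finset.sum_const]
          simp [mul_inv_cancel₀ (show (n:ℝ) ≠ 0 by positivity)]
  · intro k
    have : ∑ i, ((n : ℝ)⁻¹) * (pihat (x i) * (Φ (x i) k - φhat k))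
        = ∑ i, p i * (Φ (x i) k - φhat k) := by
      refine Finset.sum_congr rfl fun i _ => ?_
      rw [hkey i]; ring
    rw [this]
    have := hbal k
    calc ∑ i, p i * (Φ (x i) k - φhat k)
        = (∑ i, (Φ (x i) k - φhat k) *
            Real.exp (∑ j, lam j * (Φ (x i) j - φhat j))) / S := by
          rw [Finset.sum_div]
          refine Finset.sum_congr rfl fun i _ => ?_
          rw [hp i]; ring
      _ = 0 := by rw [this, zero_div]
  · intro y
    refine Finset.sum_congr rfl fun i _ => ?_
    rw [hkey i]
end
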